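/- If f : [0,1] → ℝ is a non-decreasing function (a profile), then its update Uf is also non-decreasing. Consequently, for every t ∈ ℕ the t-fold update Uᵗf is a well-defined profile. -/

import Mathlib

open MeasureTheory Set

/-- The neighbourhood `N_α(f)` of an agent `α ∈ [0,1]`:
all agents `β ∈ [0,1]` whose opinion is within distance 1 of that of `α`. -/
def nbhdHK (f : ℝ → ℝ) (α : ℝ) : Set ℝ :=
  {β | β ∈ Icc (0:ℝ) 1 ∧ |f β - f α| ≤ 1}

/-- The Hegselmann–Krause updating operator `U`:
`Uf(α)` is the average of `f` over `N_α(f)` if that set has positive Lebesgue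
measure, and `f(α)` otherwise. -/
noncomputable def updateHK (f : ℝ → ℝ) (α : ℝ) : ℝ :=
  if 0 < (volume (nbhdHK f α)).toReal then
    (∫ β in nbhdHK f α, f β) / (volume (nbhdHK f α)).toReal
  else f α

lemma nbhd_subset (f : ℝ → ℝ) (α : ℝ) : nbhdHK f α ⊆ Icc (0:ℝ) 1 := fun _ h => h.1

lemma nbhd_meas {f : ℝ → ℝ} (hf : MonotoneOn f (Icc 0 1)) (α : ℝ) :
    MeasurableSet (nbhdHK f α) := by
  apply Set.OrdConnected.measurableSet
  constructor
  intro x hx y hy z hz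
  have hxI := hx.1; have hyI := hy.1
  have hzI : z ∈ Icc (0:ℝ) 1 := ⟨le_trans hxI.1 hz.1, le_trans hz.2 hyI.2⟩
  refine ⟨hzI, abs_le.2 ⟨?_, ?_⟩⟩
  · have := (abs_le.1 hx.2).1
    linarith [hf hxI hzI hz.1]
  · have := (abs_le.1 hy.2).2
    linarith [hf hzI hyI hz.2]

lemma nbhd_vol_ne_top (f : ℝ → ℝ) (α : ℝ) : volume (nbhdHK f α) ≠ ⊤ :=
  ne_top_of_le_ne_top (by simp) (measure_mono (nbhd_subset f α))

lemma integrableOn_of_mono {f : ℝ → ℝ} (hf : MonotoneOn f (Icc 0 1)) {s : Set ℝ}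
    (hm : MeasurableSet s) (hs : s ⊆ Icc 0 1) {C : ℝ} (hC : ∀ x ∈ s, |f x| ≤ C) :
    IntegrableOn f s volume := by
  have hfin : volume s ≠ ⊤ := ne_top_of_le_ne_top (by simp) (measure_mono hs)
  have hconst : IntegrableOn (fun _ => C) s volume := by
    simp [integrableOn_const, hfin.lt_top]
  refine Integrable.mono' hconst
    ((aemeasurable_restrict_of_monotoneOn hm (hf.mono hs)).aestronglyMeasurable) ?_
  exact (ae_restrict_iff' hm).mpr <| ae_of_all _ fun y hy => by
    simpa [Real.norm_eq_abs] using hC y hy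

lemma key {f : ℝ → ℝ} (hf : MonotoneOn f (Icc 0 1)) :
    MonotoneOn (updateHK f) (Icc 0 1) := by
  intro α hα α' hα' hle
  set A := nbhdHK f α with hA
  set B := nbhdHK f α' with hB
  have hfa : f α ≤ f α' := hf hα hα' hle
  have hmA : MeasurableSet A := nbhd_meas hf α
  have hmB : MeasurableSet B := nbhd_meas hf α'
  have hAsub : A ⊆ Icc 0 1 := nbhd_subset f α
  have hBsub : B ⊆ Icc 0 1 := nbhd_subset f α'
  have hAfin : volume A ≠ ⊤ := nbhd_vol_ne_top f α
  have hBfin : volume B ≠ ⊤ := nbhd_vol_ne_top f α'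
  -- pointwise bounds
  have hAub : ∀ x ∈ A, f x ≤ f α + 1 := fun x hx => by
    have := (abs_le.1 hx.2).2; linarith
  have hBlb : ∀ y ∈ B, f α' - 1 ≤ f y := fun y hy => by
    have := (abs_le.1 hy.2).1; linarith
  have hABub : ∀ x ∈ A \ B, f x ≤ f α' - 1 := by
    intro x ⟨hxA, hxB⟩
    by_contra h
    push_neg at h
    exact hxB ⟨hxA.1, abs_le.2 ⟨by linarith, by linarith [hAub x hxA]⟩⟩
  have hBAlb : ∀ y ∈ B \ A, f α + 1 ≤ f y := by
    intro y ⟨hyB, hyA⟩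
    by_contra h
    push_neg at h
    exact hyA ⟨hyB.1, abs_le.2 ⟨by linarith [hBlb y hyB], by linarith⟩⟩
  -- integrability
  have hboundA : ∀ x ∈ A, |f x| ≤ |f α| + 1 := fun x hx => by
    have h1 := abs_sub_abs_le_abs_sub (f x) (f α)
    linarith [hx.2]
  have hboundB : ∀ x ∈ B, |f x| ≤ |f α'| + 1 := fun x hx => by
    have h1 := abs_sub_abs_le_abs_sub (f x) (f α')
    linarith [hx.2]
  have hintA : IntegrableOn f A volume := integrableOn_of_mono hf hmA hAsub hboundA
  have hintB : IntegrableOn f B volume := integrableOn_of_mono hf hmB hBsub hboundB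
  have hintAB : IntegrableOn f (A \ B) volume := hintA.mono_set diff_subset
  have hintBA : IntegrableOn f (B \ A) volume := hintB.mono_set diff_subset
  have hintC : IntegrableOn f (A ∩ B) volume := hintA.mono_set inter_subset_left
  -- measures
  set a := (volume (A \ B)).toReal
  set b := (volume (B \ A)).toReal
  set c := (volume (A ∩ B)).toReal
  have ha0 : 0 ≤ a := ENNReal.toReal_nonneg
  have hb0 : 0 ≤ b := ENNReal.toReal_nonneg
  have hc0 : 0 ≤ c := ENNReal.toReal_nonneg
  have hmeasA : (volume A).toReal = a + c := by
    rw [← ENNReal.toReal_add (ne_top_of_le_ne_top hAfin (measure_mono diff_subset))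
      (ne_top_of_le_ne_top hAfin (measure_mono inter_subset_left))]
    congr 1
    rw [← measure_union (disjoint_sdiff_left.mono_right inter_subset_right) (hmA.inter hmB)]
    congr 1
    exact (diff_union_inter A B).symm
  have hmeasB : (volume B).toReal = b + c := by
    have h1 : volume B = volume (B \ A) + volume (B ∩ A) := by
      rw [← measure_union (disjoint_sdiff_left.mono_right inter_subset_right) (hmB.inter hmA),
        diff_union_inter]
    rw [h1, ENNReal.toReal_add (ne_top_of_le_ne_top hBfin (measure_mono diff_subset))
      (ne_top_of_le_ne_top hBfin (measure_mono inter_subset_left)), inter_comm B A]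
  -- integrals split
  set I1 := ∫ x in A \ B, f x
  set I2 := ∫ x in A ∩ B, f x
  set I3 := ∫ x in B \ A, f x
  have hIA : ∫ x in A, f x = I1 + I2 := by
    rw [← setIntegral_union (disjoint_sdiff_left.mono_right inter_subset_right)
      (hmA.inter hmB) hintAB hintC, diff_union_inter]
  have hIB : ∫ x in B, f x = I3 + I2 := by
    have h2 : I2 = ∫ x in B ∩ A, f x := by rw [inter_comm]
    rw [h2, ← setIntegral_union (disjoint_sdiff_left.mono_right inter_subset_right)
      (hmB.inter hmA) hintBA (hintB.mono_set inter_subset_left), diff_union_inter]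
  -- integral bounds
  have hI1 : I1 ≤ a * (f α' - 1) := by
    calc I1 ≤ ∫ _ in A \ B, (f α' - 1) :=
          setIntegral_mono_on hintAB (integrableOn_const (
            (ne_top_of_le_ne_top hAfin (measure_mono diff_subset))))
            (hmA.diff hmB) hABub
      _ = a * (f α' - 1) := by rw [setIntegral_const]; ring_nf; rfl
  have hI2l : c * (f α' - 1) ≤ I2 := by
    calc c * (f α' - 1) = ∫ _ in A ∩ B, (f α' - 1) := by
          rw [setIntegral_const, smul_eq_mul]; rfl
      _ ≤ I2 := setIntegral_mono_on (integrableOn_const (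
            (ne_top_of_le_ne_top hAfin (measure_mono inter_subset_left)))) hintC
            (hmA.inter hmB) (fun x hx => hBlb x hx.2)
  have hI2u : I2 ≤ c * (f α + 1) := by
    calc I2 ≤ ∫ _ in A ∩ B, (f α + 1) :=
          setIntegral_mono_on hintC (integrableOn_const (
            (ne_top_of_le_ne_top hAfin (measure_mono inter_subset_left))))
            (hmA.inter hmB) (fun x hx => hAub x hx.1)
      _ = c * (f α + 1) := by rw [setIntegral_const, smul_eq_mul]; rfl
  have hI3l : b * (f α' - 1) ≤ I3 := by
    calc b * (f α' - 1) = ∫ _ in B \ A, (f α' - 1) := by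
          rw [setIntegral_const, smul_eq_mul]; rfl
      _ ≤ I3 := setIntegral_mono_on (integrableOn_const (
            (ne_top_of_le_ne_top hBfin (measure_mono diff_subset)))) hintBA
            (hmB.diff hmA) (fun x hx => hBlb x hx.1)
  have hI3l2 : b * (f α + 1) ≤ I3 := by
    calc b * (f α + 1) = ∫ _ in B \ A, (f α + 1) := by
          rw [setIntegral_const, smul_eq_mul]; rfl
      _ ≤ I3 := setIntegral_mono_on (integrableOn_const (
            (ne_top_of_le_ne_top hBfin (measure_mono diff_subset)))) hintBA
            (hmB.diff hmA) hBAlb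
  -- case analysis
  unfold updateHK
  rw [← hA, ← hB]
  by_cases hApos : 0 < (volume A).toReal
  · by_cases hBpos : 0 < (volume B).toReal
    · rw [if_pos hApos, if_pos hBpos, hIA, hIB, div_le_div_iff₀ hApos hBpos, hmeasA, hmeasB]
      nlinarith [mul_le_mul_of_nonneg_right hI1 hb0, mul_le_mul_of_nonneg_right hI1 hc0,
        mul_le_mul_of_nonneg_right hI2u hb0, mul_le_mul_of_nonneg_right hI2l ha0,
        mul_le_mul_of_nonneg_right hI3l ha0, mul_le_mul_of_nonneg_right hI3l2 hc0]
    · rw [if_pos hApos, if_neg hBpos]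
      have hB0 : volume B = 0 := by
        by_contra h
        exact hBpos (ENNReal.toReal_pos h hBfin)
      have hAB0 : volume (A ∩ B) = 0 := measure_mono_null inter_subset_right hB0
      have hc : c = 0 := by simp [c, hAB0]
      have hI2 : I2 = 0 := setIntegral_measure_zero _ hAB0
      rw [hIA, hI2, add_zero, div_le_iff₀ hApos, hmeasA, hc, add_zero]
      calc I1 ≤ a * (f α' - 1) := hI1
        _ ≤ f α' * a := by nlinarith
  · by_cases hBpos : 0 < (volume B).toReal
    · rw [if_neg hApos, if_pos hBpos]
      have hA0 : volume A = 0 := by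
        by_contra h
        exact hApos (ENNReal.toReal_pos h hAfin)
      have hAB0 : volume (A ∩ B) = 0 := measure_mono_null inter_subset_left hA0
      have hc : c = 0 := by simp [c, hAB0]
      have hI2 : I2 = 0 := setIntegral_measure_zero _ hAB0
      rw [hIB, hI2, add_zero, le_div_iff₀ hBpos, hmeasB, hc, add_zero]
      calc f α * b ≤ (f α + 1) * b := by nlinarith
        _ = b * (f α + 1) := by ring
        _ ≤ I3 := hI3l2
    · rw [if_neg hApos, if_neg hBpos]; exact hfa

/-- if `f : [0,1] → ℝ` is non-decreasing (a profile), then so is `Uf`;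
consequently every iterate `Uᵗf` is a well-defined profile. -/
theorem stmt0 (f : ℝ → ℝ) (hf : MonotoneOn f (Icc 0 1)) :
    MonotoneOn (updateHK f) (Icc 0 1) ∧
      ∀ t : ℕ, MonotoneOn (updateHK^[t] f) (Icc 0 1) := by
  refine ⟨key hf, ?_⟩
  intro t
  induction t with
  | zero => simpa using hf
  | succ n ih =>
    rw [Function.iterate_succ_apply']
    exact key ih
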